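/- Let π and μ be pdfs on ℝ, both ASU(0), and let a ∈ ℝ with a ≠ 0. Define π̃(x) := (1/|a|) π(x/a). Then the convolution (π̃ ⋆ μ)(x) = ∫_ℝ π̃(x − w) μ(w) dw is a pdf on ℝ and is ASU(0). -/

import Mathlib

open MeasureTheory Set
open scoped ENNReal NNReal

noncomputable section

/-- A probability density function on ℝ: measurable, nonnegative (via `ℝ≥0`),
integrating to one against Lebesgue measure. -/
def IsPdf (f : ℝ → ℝ≥0) : Prop :=
  Measurable f ∧ ∫⁻ x, (f x : ℝ≥0∞) = 1

/-- `f` is symmetric and unimodal about `c`. -/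
def ASU (c : ℝ) (f : ℝ → ℝ≥0) : Prop :=
  (∀ x, f (c - x) = f (c + x)) ∧ MonotoneOn f (Iic c) ∧ AntitoneOn f (Ici c)

/-- A distortion function: measurable, even, nondecreasing on `[0, ∞)`. -/
def IsDistortion (d : ℝ → ℝ≥0∞) : Prop :=
  Measurable d ∧ (∀ x, d (-x) = d x) ∧ MonotoneOn d (Ici (0 : ℝ))

/-- A pdf allowed to take values in `[0,∞]`. -/
def IsPdfE (f : ℝ → ℝ≥0∞) : Prop :=
  Measurable f ∧ ∫⁻ x, f x = 1

/-- Symmetric and unimodal about `c`, for `[0,∞]`-valued functions. -/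
def ASUE (c : ℝ) (f : ℝ → ℝ≥0∞) : Prop :=
  (∀ x, f (c - x) = f (c + x)) ∧ MonotoneOn f (Iic c) ∧ AntitoneOn f (Ici c)

/-- Rearrangement-type inequality in `ℝ≥0∞`. -/
lemma enn_rearrange {A A' B B' : ℝ≥0∞} (hA : A' ≤ A) (hB : B' ≤ B) :
    A' * B + A * B' ≤ A * B + A' * B' := by
  obtain ⟨d, rfl⟩ := exists_add_of_le hA
  obtain ⟨e, rfl⟩ := exists_add_of_le hB
  have : (A' + d) * (B' + e) + A' * B'
      = (A' * (B' + e) + (A' + d) * B') + d * e := by ring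
  rw [this]
  exact le_self_add

/-- Property 3: with `π̃(x) = (1/|a|) π(x/a)`, the convolution `π̃ ⋆ μ` of ASU(0) pdfs
is a pdf and is ASU(0). -/
theorem stmt2 (π μ : ℝ → ℝ≥0) (a : ℝ) (ha : a ≠ 0)
    (hπ : IsPdf π) (hπA : ASU 0 π) (hμ : IsPdf μ) (hμA : ASU 0 μ) :
    IsPdfE (fun x => ∫⁻ w,
      ENNReal.ofReal (1 / |a|) * (π ((x - w) / a) : ℝ≥0∞) * (μ w : ℝ≥0∞)) ∧
    ASUE 0 (fun x => ∫⁻ w,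
      ENNReal.ofReal (1 / |a|) * (π ((x - w) / a) : ℝ≥0∞) * (μ w : ℝ≥0∞)) := by
  set k : ℝ≥0∞ := ENNReal.ofReal (1 / |a|) with hk
  set P : ℝ → ℝ≥0∞ := fun u => k * (π (u / a) : ℝ≥0∞) with hPdef
  set Q : ℝ → ℝ≥0∞ := fun w => (μ w : ℝ≥0∞) with hQdef
  have hπc : Measurable fun u => (π u : ℝ≥0∞) := hπ.1.coe_nnreal_ennreal
  have hQm : Measurable Q := hμ.1.coe_nnreal_ennreal
  have hPm : Measurable P :=
    measurable_const.mul (hπc.comp (measurable_id.div_const a))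
  -- symmetry of π, μ about 0
  have hπsym : ∀ u : ℝ, π (-u) = π u := by
    intro u; have := hπA.1 u; simpa using this
  have hμsym : ∀ u : ℝ, μ (-u) = μ u := by
    intro u; have := hμA.1 u; simpa using this
  -- π, μ are antitone in absolute value
  have habs : ∀ (f : ℝ → ℝ≥0), (∀ u, f (-u) = f u) → AntitoneOn f (Ici 0) →
      ∀ s t : ℝ, |s| ≤ |t| → f t ≤ f s := by
    intro f hsym hanti s t hst
    have hfs : f s = f |s| := by
      rcases abs_choice s with h | h
      · rw [h]
      · rw [h, hsym]
    have hft : f t = f |t| := by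
      rcases abs_choice t with h | h
      · rw [h]
      · rw [h, hsym]
    rw [hfs, hft]
    exact hanti (abs_nonneg s) ((abs_nonneg s).trans hst) hst
  have hπabs := habs π hπsym hπA.2.2
  have hμabs := habs μ hμsym hμA.2.2
  -- P is even and antitone in absolute value
  have hPsym : ∀ u : ℝ, P (-u) = P u := by
    intro u
    simp only [hPdef]
    rw [neg_div, hπsym]
  have hPabs : ∀ s t : ℝ, |s| ≤ |t| → P t ≤ P s := by
    intro s t hst
    simp only [hPdef]
    refine mul_le_mul_right ?_ k
    have : |s / a| ≤ |t / a| := by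
      rw [abs_div, abs_div]
      gcongr
    exact_mod_cast hπabs _ _ this
  have hQsym : ∀ u : ℝ, Q (-u) = Q u := by
    intro u; simp only [hQdef]; exact_mod_cast hμsym u
  have hQabs : ∀ s t : ℝ, |s| ≤ |t| → Q t ≤ Q s := by
    intro s t hst; simp only [hQdef]; exact_mod_cast hμabs s t hst
  set g : ℝ → ℝ≥0∞ := fun x => ∫⁻ w, P (x - w) * Q w with hgdef
  -- measurability of g
  have hgm : Measurable g := by
    apply Measurable.lintegral_prod_right'
      (f := fun p : ℝ × ℝ => P (p.1 - p.2) * Q p.2)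
    exact (hPm.comp (measurable_fst.sub measurable_snd)).mul (hQm.comp measurable_snd)
  -- integral of P is 1
  have hPint : ∫⁻ u, P u = 1 := by
    have h1 : ∫⁻ u, P u = k * ∫⁻ u, (π (u / a) : ℝ≥0∞) := by
      simp only [hPdef]
      exact lintegral_const_mul k (hπc.comp (measurable_id.div_const a))
    have h2 : ∫⁻ u, (π (u / a) : ℝ≥0∞) = ENNReal.ofReal |a| := by
      have hmap := Real.map_volume_mul_right (inv_ne_zero ha)
      have h3 : ∫⁻ u, (π (u * a⁻¹) : ℝ≥0∞)
          = ∫⁻ v, (π v : ℝ≥0∞) ∂(Measure.map (· * a⁻¹) volume) :=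
        (lintegral_map hπc (measurable_mul_const a⁻¹)).symm
      simp only [div_eq_mul_inv]
      rw [h3, hmap, lintegral_smul_measure, hπ.2, inv_inv, smul_eq_mul, mul_one]
    rw [h1, h2, hk, ← ENNReal.ofReal_mul (by positivity)]
    rw [one_div, inv_mul_cancel₀ (abs_ne_zero.mpr ha), ENNReal.ofReal_one]
  constructor
  · refine ⟨hgm, ?_⟩
    have hswap : ∫⁻ x, g x = ∫⁻ w, ∫⁻ x, P (x - w) * Q w := by
      apply lintegral_lintegral_swap
      exact ((hPm.comp (measurable_fst.sub measurable_snd)).mul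
        (hQm.comp measurable_snd)).aemeasurable
    rw [hswap]
    have : ∀ w : ℝ, ∫⁻ x, P (x - w) * Q w = Q w := by
      intro w
      have hm : Measurable fun x : ℝ => P (x - w) := hPm.comp (measurable_id.sub_const w)
      rw [lintegral_mul_const (f := fun x : ℝ => P (x - w)) _ hm,
        lintegral_sub_right_eq_self P w, hPint, one_mul]
    simp only [this]
    exact hμ.2
  · -- ASUE
    have hgsym : ∀ x : ℝ, g (-x) = g x := by
      intro x
      have hF : Measurable fun w => P (x - w) * Q w :=
        (hPm.comp (measurable_const.sub measurable_id)).mul hQm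
      have := (Measure.measurePreserving_neg (volume : Measure ℝ)).lintegral_comp hF
      -- this : ∫⁻ w, P (x - (-w)) * Q (-w) = ∫⁻ w, P (x - w) * Q w = g x
      calc g (-x) = ∫⁻ w, P (x - (-w)) * Q (-w) := by
            apply lintegral_congr
            intro w
            rw [hQsym]
            congr 1
            rw [← hPsym (x - -w)]
            ring_nf
          _ = g x := this
    have hganti : AntitoneOn g (Ici (0 : ℝ)) := by
      intro x hx y hy hxy
      simp only [mem_Ici] at hx hy
      set c : ℝ := (x + y) / 2 with hc
      set h : ℝ := (y - x) / 2 with hh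
      have hh0 : 0 ≤ h := by simp only [hh]; linarith
      have hch : h ≤ c := by simp only [hc, hh]; linarith
      have hc0 : 0 ≤ c := hh0.trans hch
      -- change of variables w = c - t
      have hsub : ∀ z : ℝ, g z = ∫⁻ t, P (z - c + t) * Q (c - t) := by
        intro z
        have hF : Measurable fun w => P (z - w) * Q w :=
          (hPm.comp (measurable_const.sub measurable_id)).mul hQm
        have := (Measure.measurePreserving_sub_left (volume : Measure ℝ) c).lintegral_comp hF
        calc g z = ∫⁻ w, P (z - w) * Q w := rfl
          _ = ∫⁻ t, P (z - (c - t)) * Q (c - t) := this.symm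
          _ = ∫⁻ t, P (z - c + t) * Q (c - t) := by
              apply lintegral_congr; intro t; ring_nf
      have hgy : g y = ∫⁻ t, P (t + h) * Q (c - t) := by
        rw [hsub y]
        apply lintegral_congr; intro t
        congr 2
        simp only [hc, hh]; ring
      have hgx : g x = ∫⁻ t, P (t - h) * Q (c - t) := by
        rw [hsub x]
        apply lintegral_congr; intro t
        congr 2
        simp only [hc, hh]; ring
      -- reflected versions
      have hmF : ∀ (b : ℝ), Measurable fun t : ℝ => P (t + b) * Q (c - t) :=
        fun b => (hPm.comp (measurable_id.add_const b)).mul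
          (hQm.comp (measurable_const.sub measurable_id))
      have hrefl : ∀ b : ℝ, ∫⁻ t, P (t + b) * Q (c - t) = ∫⁻ t, P (t - b) * Q (c + t) := by
        intro b
        have := (Measure.measurePreserving_neg (volume : Measure ℝ)).lintegral_comp (hmF b)
        calc ∫⁻ t, P (t + b) * Q (c - t)
            = ∫⁻ t, P (-t + b) * Q (c - -t) := this.symm
          _ = ∫⁻ t, P (t - b) * Q (c + t) := by
              apply lintegral_congr; intro t
              rw [← hPsym (t - b)]
              congr 2 <;> ring
      have h2y : 2 * g y = ∫⁻ t, (P (t + h) * Q (c - t) + P (t - h) * Q (c + t)) := by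
        rw [two_mul, hgy]
        nth_rewrite 2 [hrefl h]
        exact (lintegral_add_left (hmF h) _).symm
      have h2x : 2 * g x = ∫⁻ t, (P (t - h) * Q (c - t) + P (t + h) * Q (c + t)) := by
        rw [two_mul, hgx]
        have heq : ∫⁻ t, P (t - h) * Q (c - t) = ∫⁻ t, P (t + h) * Q (c + t) := by
          have := hrefl (-h)
          simpa [sub_eq_add_neg] using this
        nth_rewrite 2 [heq]
        have hm' : Measurable fun t : ℝ => P (t - h) * Q (c - t) := by
          have := hmF (-h)
          simpa [sub_eq_add_neg] using this
        exact (lintegral_add_left hm' _).symm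
      -- pointwise comparison
      have hpt : ∀ t : ℝ, P (t + h) * Q (c - t) + P (t - h) * Q (c + t)
          ≤ P (t - h) * Q (c - t) + P (t + h) * Q (c + t) := by
        intro t
        rcases le_total 0 t with ht | ht
        · have hA : P (t + h) ≤ P (t - h) := by
            apply hPabs
            rw [abs_of_nonneg (by linarith : (0:ℝ) ≤ t + h)]
            rw [abs_le]; constructor <;> linarith
          have hB : Q (c + t) ≤ Q (c - t) := by
            apply hQabs
            rw [abs_of_nonneg (by linarith : (0:ℝ) ≤ c + t)]
            rw [abs_le]; constructor <;> linarith
          exact enn_rearrange hA hB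
        · have hA : P (t - h) ≤ P (t + h) := by
            apply hPabs
            rw [abs_of_nonpos (by linarith : t - h ≤ 0)]
            rw [abs_le]; constructor <;> linarith
          have hB : Q (c - t) ≤ Q (c + t) := by
            apply hQabs
            rw [abs_of_nonneg (by linarith : (0:ℝ) ≤ c - t)]
            rw [abs_le]; constructor <;> linarith
          have := enn_rearrange hA hB
          calc P (t + h) * Q (c - t) + P (t - h) * Q (c + t)
              = P (t - h) * Q (c + t) + P (t + h) * Q (c - t) := by rw [add_comm]
            _ ≤ P (t + h) * Q (c + t) + P (t - h) * Q (c - t) := this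
            _ = P (t - h) * Q (c - t) + P (t + h) * Q (c + t) := by rw [add_comm]
      have hle : 2 * g y ≤ 2 * g x := by
        rw [h2y, h2x]
        exact lintegral_mono hpt
      exact (ENNReal.mul_le_mul_iff_right (by norm_num) (by norm_num)).mp hle
    refine ⟨fun x => by simpa using hgsym x, ?_, hganti⟩
    intro x hx y hy hxy
    simp only [mem_Iic] at hx hy
    have := hganti (by simp [mem_Ici]; linarith) (by simp [mem_Ici]; linarith)
      (by linarith : -y ≤ -x)
    rwa [hgsym x, hgsym y] at this
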